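/- For a one-hidden-layer ReLU network f(x) = W2 * max(0, W1 x + b1) + b2 with K = 2 output classes, suppose x is classified as class 1 (f_1(x) > f_2(x)) and (W1 x + b1)_i != 0 for all i. Let V = W2 Sigma(x) W1, c = W2 Sigma(x) b1 + b2, d_D = (f_1(x) - f_2(x)) / ||V_1 - V_2||_q and d_B = min_i |(W1 x + b1)_i| / ||(W1)_i||_q. If d_B <= d_D, then f_1(x + delta) > f_2(x + delta) for all delta with ||delta||_p < d_B. -/

import Mathlib

open scoped BigOperators ENNReal

/-- The `l_p` norm of a vector in `ℝ^d`. -/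
noncomputable def pnorm (p : ℝ≥0∞) {d : ℕ} (x : Fin d → ℝ) : ℝ :=
  ‖(WithLp.equiv p (Fin d → ℝ)).symm x‖

/-- Standard inner product on `ℝ^d`. -/
noncomputable def dotp {d : ℕ} (w x : Fin d → ℝ) : ℝ := ∑ i, w i * x i

lemma pnorm_eq_sum' {d : ℕ} {p : ℝ≥0∞} (hp : 0 < p.toReal) (x : Fin d → ℝ) :
    pnorm p x = (∑ i, |x i| ^ p.toReal) ^ (1 / p.toReal) := by
  rw [pnorm, PiLp.norm_eq_sum hp]
  simp [Real.norm_eq_abs, PiLp.toLp_apply]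

lemma pnorm_eq_csSup' {d : ℕ} (x : Fin d → ℝ) :
    pnorm ∞ x = ⨆ i, |x i| := by
  rw [pnorm, PiLp.norm_eq_ciSup]
  simp [Real.norm_eq_abs, PiLp.toLp_apply]

lemma pnorm_one_eq' {d : ℕ} (x : Fin d → ℝ) : pnorm 1 x = ∑ i, |x i| := by
  rw [pnorm_eq_sum' (by norm_num)]
  simp

lemma pnorm_top_le' {d : ℕ} (x : Fin d → ℝ) (i : Fin d) : |x i| ≤ pnorm ∞ x := by
  rw [pnorm_eq_csSup']
  exact le_ciSup (f := fun j => |x j|) (Set.Finite.bddAbove (Set.finite_range _)) i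

/-- Hölder plus the positivity facts we need, packaged. -/
lemma holder_key' {d : ℕ} (p q : ℝ≥0∞) (hp : 1 ≤ p) (hpq : 1/p + 1/q = 1)
    (w δ : Fin d → ℝ) :
    |dotp w δ| ≤ pnorm q w * pnorm p δ ∧ (w ≠ 0 → 0 < pnorm q w) := by
  have hconj : p.HolderConjugate q := ⟨by simpa [one_div] using hpq⟩
  have habs : |dotp w δ| ≤ ∑ i, |w i| * |δ i| := by
    rw [dotp]
    refine le_trans (Finset.abs_sum_le_sum_abs _ _) ?_
    simp [abs_mul, le_refl]
  rcases eq_or_ne p 1 with rfl | hp1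
  · -- p = 1, q = ∞
    have hq : q = ∞ := by simpa using (ENNReal.HolderConjugate.conj_eq (p := 1) (q := q))
    subst hq
    constructor
    · refine le_trans habs ?_
      rw [pnorm_one_eq', Finset.mul_sum]
      refine Finset.sum_le_sum fun i _ => ?_
      rw [mul_comm (pnorm ⊤ w) (|δ i|), mul_comm (|w i|)]
      exact mul_le_mul_of_nonneg_left (pnorm_top_le' w i) (abs_nonneg _)
    · intro hw
      obtain ⟨i, hi⟩ := Function.ne_iff.mp hw
      exact lt_of_lt_of_le (abs_pos.mpr (by simpa using hi)) (pnorm_top_le' w i)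
  rcases eq_or_ne p ∞ with rfl | ptop
  · -- p = ∞, q = 1
    have hq : q = 1 := by simpa using (ENNReal.HolderConjugate.conj_eq (p := ∞) (q := q))
    subst hq
    constructor
    · refine le_trans habs ?_
      rw [pnorm_one_eq', Finset.sum_mul]
      refine Finset.sum_le_sum fun i _ => ?_
      exact mul_le_mul_of_nonneg_left (pnorm_top_le' δ i) (abs_nonneg _)
    · intro hw
      obtain ⟨i, hi⟩ := Function.ne_iff.mp hw
      rw [pnorm_one_eq']
      refine lt_of_lt_of_le (abs_pos.mpr (by simpa using hi)) ?_
      exact Finset.single_le_sum (f := fun j => |w j|) (fun j _ => abs_nonneg _)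
        (Finset.mem_univ i)
  · -- 1 < p < ∞
    have hq0 : q ≠ 0 := ENNReal.HolderConjugate.ne_zero q p
    have hqtop : q ≠ ∞ := by
      rintro rfl
      apply hp1
      have := ENNReal.HolderConjugate.inv_add_inv_eq_one p ∞
      simp only [ENNReal.inv_top, add_zero] at this
      simpa [ENNReal.inv_eq_one] using this
    have hp0 : p ≠ 0 := ENNReal.HolderConjugate.ne_zero p q
    have hpt : 1 < p.toReal := by
      rw [← ENNReal.toReal_one]
      exact ENNReal.toReal_strict_mono ptop (lt_of_le_of_ne hp (Ne.symm hp1))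
    have hqt0 : 0 < q.toReal := ENNReal.toReal_pos hq0 hqtop
    have hrconj : Real.HolderConjugate p.toReal q.toReal := by
      rw [Real.holderConjugate_iff]
      constructor
      · exact hpt
      · have := ENNReal.HolderConjugate.inv_add_inv_eq_one p q
        have h2 : (p⁻¹ + q⁻¹).toReal = (1:ℝ≥0∞).toReal := by rw [this]
        rw [ENNReal.toReal_add (by simp [hp0]) (by simp [hq0])] at h2
        simpa [ENNReal.toReal_inv, one_div] using h2
    constructor
    · refine le_trans habs ?_
      rw [pnorm_eq_sum' (lt_trans one_pos hpt) δ, pnorm_eq_sum' hqt0 w]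
      have := Real.inner_le_Lp_mul_Lq Finset.univ (fun i => |w i|) (fun i => |δ i|)
        hrconj.symm
      simpa [abs_abs] using this
    · intro hw
      obtain ⟨i, hi⟩ := Function.ne_iff.mp hw
      rw [pnorm_eq_sum' hqt0 w]
      apply Real.rpow_pos_of_pos
      refine lt_of_lt_of_le (Real.rpow_pos_of_pos (abs_pos.mpr (by simpa using hi)) q.toReal) ?_
      exact Finset.single_le_sum (f := fun j => |w j| ^ q.toReal)
        (fun j _ => Real.rpow_nonneg (abs_nonneg _) _) (Finset.mem_univ i)

/-- Robustness guarantee for a one-hidden-layer ReLU network with two classes: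
if d_B ≤ d_D then every perturbation of norm < d_B keeps the decision. -/
theorem stmt9 {d n : ℕ} (p q : ℝ≥0∞) (hp : 1 ≤ p) (hpq : 1/p + 1/q = 1)
    (hn : 0 < n) (W1 : Fin n → Fin d → ℝ) (b1 : Fin n → ℝ)
    (W2 : Fin 2 → Fin n → ℝ) (b2 : Fin 2 → ℝ) (x : Fin d → ℝ)
    (f : (Fin d → ℝ) → Fin 2 → ℝ)
    (hf : ∀ z r, f z r = dotp (W2 r) (fun i => max 0 (dotp (W1 i) z + b1 i)) + b2 r)
    (hx : ∀ i : Fin n, dotp (W1 i) x + b1 i ≠ 0)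
    (hW1 : ∀ i : Fin n, W1 i ≠ 0)
    (hclass : f x 1 < f x 0)
    (V : Fin 2 → Fin d → ℝ)
    (hV : ∀ r j, V r j = ∑ i, W2 r i *
        (if 0 < dotp (W1 i) x + b1 i then (1 : ℝ) else 0) * W1 i j)
    (hV12 : V 0 ≠ V 1)
    (dD dB : ℝ)
    (hdD : dD = (f x 0 - f x 1) / pnorm q (V 0 - V 1))
    (hdB : dB = Finset.univ.inf' ⟨⟨0, hn⟩, Finset.mem_univ _⟩
        (fun i : Fin n => |dotp (W1 i) x + b1 i| / pnorm q (W1 i)))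
    (hBD : dB ≤ dD) :
    ∀ δ : Fin d → ℝ, pnorm p δ < dB → f (x + δ) 1 < f (x + δ) 0 := by
  intro δ hδ
  set pre : Fin n → ℝ := fun i => dotp (W1 i) x + b1 i with hpredef
  set σ : Fin n → ℝ := fun i => if 0 < pre i then (1:ℝ) else 0 with hσdef
  -- per-neuron bounds
  have hinf : ∀ i : Fin n, dB ≤ |pre i| / pnorm q (W1 i) := by
    intro i
    rw [hdB]
    exact Finset.inf'_le _ (Finset.mem_univ i)
  have hsmall : ∀ i, |dotp (W1 i) δ| < |pre i| := by
    intro i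
    obtain ⟨hH, hpos⟩ := holder_key' p q hp hpq (W1 i) δ
    have hNi := hpos (hW1 i)
    calc |dotp (W1 i) δ| ≤ pnorm q (W1 i) * pnorm p δ := hH
      _ < pnorm q (W1 i) * dB := mul_lt_mul_of_pos_left hδ hNi
      _ ≤ pnorm q (W1 i) * (|pre i| / pnorm q (W1 i)) :=
          mul_le_mul_of_nonneg_left (hinf i) hNi.le
      _ = |pre i| := by rw [mul_comm, div_mul_cancel₀ _ hNi.ne']
  have hlin : ∀ (w z y : Fin d → ℝ), dotp w (z + y) = dotp w z + dotp w y := by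
    intro w z y
    simp [dotp, Pi.add_apply, mul_add, Finset.sum_add_distrib]
  -- ReLU linearization at x and at x + δ
  have hrelu : ∀ i, max 0 (pre i) = σ i * pre i := by
    intro i
    by_cases h : 0 < pre i
    · simp [hσdef, h, max_eq_right h.le]
    · have hne : pre i ≠ 0 := hx i
      have hneg : pre i < 0 := lt_of_le_of_ne (not_lt.mp h) hne
      simp [hσdef, h, max_eq_left hneg.le]
  have hrelu2 : ∀ i, max 0 (pre i + dotp (W1 i) δ) = σ i * (pre i + dotp (W1 i) δ) := by
    intro i
    have habs := abs_lt.mp (hsmall i)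
    by_cases h : 0 < pre i
    · have hap : 0 < pre i + dotp (W1 i) δ := by
        have := habs.1
        rw [abs_of_pos h] at this
        linarith
      simp [hσdef, h, max_eq_right hap.le]
    · have hne : pre i ≠ 0 := hx i
      have hneg : pre i < 0 := lt_of_le_of_ne (not_lt.mp h) hne
      have hap : pre i + dotp (W1 i) δ < 0 := by
        have := habs.2
        rw [abs_of_neg hneg] at this
        linarith
      simp [hσdef, h, max_eq_left hap.le]
  -- the network is affine with matrix V around x
  have hdV : ∀ r, dotp (V r) δ = ∑ i, W2 r i * σ i * dotp (W1 i) δ := by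
    intro r
    rw [dotp]
    simp only [hV]
    have h1 : ∀ j : Fin d, (∑ i, W2 r i * σ i * W1 i j) * δ j
        = ∑ i, W2 r i * σ i * (W1 i j * δ j) := by
      intro j
      rw [Finset.sum_mul]
      exact Finset.sum_congr rfl fun i _ => by ring
    simp only [hσdef, hpredef] at h1
    simp only [h1]
    rw [Finset.sum_comm]
    refine Finset.sum_congr rfl fun i _ => ?_
    rw [dotp.eq_1 (W1 i) δ, Finset.mul_sum]
  have key : ∀ r, f (x + δ) r = f x r + ∑ i, W2 r i * σ i * dotp (W1 i) δ := by
    intro r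
    rw [hf (x + δ) r, hf x r]
    have expand : ∀ g : Fin n → ℝ, dotp (W2 r) g = ∑ i, W2 r i * g i := fun g => rfl
    rw [expand, expand]
    have h1 : ∀ i, max 0 (dotp (W1 i) (x + δ) + b1 i) = σ i * (pre i + dotp (W1 i) δ) := by
      intro i
      have : dotp (W1 i) (x + δ) + b1 i = pre i + dotp (W1 i) δ := by
        rw [hlin]; simp [hpredef]; ring
      rw [this, hrelu2]
    simp only [h1, fun i => (show max 0 (dotp (W1 i) x + b1 i) = σ i * pre i from hrelu i)]
    have h2 : ∀ i, W2 r i * (σ i * (pre i + dotp (W1 i) δ))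
        = W2 r i * (σ i * pre i) + W2 r i * σ i * dotp (W1 i) δ := fun i => by ring
    simp only [h2, Finset.sum_add_distrib]
    ring
  -- conclude
  have hsub : dotp (V 0) δ - dotp (V 1) δ = dotp (V 0 - V 1) δ := by
    simp [dotp, Pi.sub_apply, sub_mul, Finset.sum_sub_distrib]
  obtain ⟨hH, hpos⟩ := holder_key' p q hp hpq (V 0 - V 1) δ
  have hNv := hpos (sub_ne_zero.mpr hV12)
  have hb : |dotp (V 0 - V 1) δ| < f x 0 - f x 1 := by
    calc |dotp (V 0 - V 1) δ| ≤ pnorm q (V 0 - V 1) * pnorm p δ := hH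
      _ < pnorm q (V 0 - V 1) * dB := mul_lt_mul_of_pos_left hδ hNv
      _ ≤ pnorm q (V 0 - V 1) * dD := mul_le_mul_of_nonneg_left hBD hNv.le
      _ = f x 0 - f x 1 := by rw [hdD, mul_comm, div_mul_cancel₀ _ hNv.ne']
  have hge := neg_abs_le (dotp (V 0 - V 1) δ)
  have k0 := key 0
  have k1 := key 1
  rw [← hdV 0] at k0
  rw [← hdV 1] at k1
  rw [k0, k1]
  linarith [hsub, hb, hge]
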